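/- Let N ≥ 1 and 0 ≤ n ≤ N−1 be integers and ρ a real number with ρ ≠ 1 and 1+(N−n−1)ρ ≠ 0. Partition the matrix ρ·J_N + (1−ρ)·I_N into a leading (N−n)×(N−n) block A := ρ·J_{N−n} + (1−ρ)·I_{N−n} and a trailing n×n block. Then A is invertible and 𝟙ᵀ · ((ρ·J_n + (1−ρ)·I_n) − (ρ·J_{n,N−n})·A⁻¹·(ρ·J_{N−n,n})) · 𝟙 = ψ(N,n,ρ), i.e., the sum of all entries of the Schur complement of A equals ψ(N,n,ρ). -/

import Mathlib

open Matrix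

noncomputable section

/-- The all-ones matrix. -/
def J (a b : ℕ) : Matrix (Fin a) (Fin b) ℝ := Matrix.of fun _ _ => 1

/-- The cut-set quantity ψ(N,n,ρ) of Niesen–Diggavi. -/
def psi (N n : ℕ) (ρ : ℝ) : ℝ :=
  (n : ℝ) * (1 + ((n : ℝ) - 1) * ρ
    - (n : ℝ) * ((N : ℝ) - (n : ℝ)) * ρ ^ 2 / (1 + ((N : ℝ) - (n : ℝ) - 1) * ρ))

lemma Jmul (a b k : ℕ) : _root_.J a b * _root_.J b k = (b : ℝ) • _root_.J a k := by
  ext i j; simp [_root_.J, Matrix.mul_apply]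

lemma mulJI (m : ℕ) (a b a' b' : ℝ) :
    (a • J m m + b • (1 : Matrix (Fin m) (Fin m) ℝ)) *
      (a' • J m m + b' • (1 : Matrix (Fin m) (Fin m) ℝ))
    = (a * a' * m + a * b' + b * a') • J m m + (b * b') • 1 := by
  rw [Matrix.add_mul, Matrix.mul_add, Matrix.mul_add, Matrix.smul_mul, Matrix.smul_mul,
    Matrix.smul_mul, Matrix.smul_mul, Matrix.mul_smul, Matrix.mul_smul, Matrix.mul_smul,
    Matrix.mul_smul, Jmul, Matrix.mul_one, Matrix.one_mul, Matrix.mul_one, smul_smul,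
    smul_smul, smul_smul, smul_smul, smul_smul]
  rw [add_smul, add_smul]
  ring_nf
  abel

theorem stmt_8 (N n : ℕ) (hN : 1 ≤ N) (hn : n ≤ N - 1) (ρ : ℝ)
    (h1 : ρ ≠ 1) (h2 : 1 + ((N : ℝ) - (n : ℝ) - 1) * ρ ≠ 0) :
    IsUnit (ρ • J (N - n) (N - n) +
        (1 - ρ) • (1 : Matrix (Fin (N - n)) (Fin (N - n)) ℝ)) ∧
    ∑ i : Fin n, ∑ j : Fin n,
        ((ρ • J n n + (1 - ρ) • (1 : Matrix (Fin n) (Fin n) ℝ))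
          - (ρ • J n (N - n)) *
            (ρ • J (N - n) (N - n) +
              (1 - ρ) • (1 : Matrix (Fin (N - n)) (Fin (N - n)) ℝ))⁻¹ *
            (ρ • J (N - n) n)) i j
      = psi N n ρ := by
  set m := N - n with hm
  have hnN : n ≤ N := le_trans hn (Nat.sub_le N 1)
  have hcast : ((m : ℝ)) = (N : ℝ) - n := by
    rw [hm, Nat.cast_sub hnN]
  have hc0 : (1 + ((m : ℝ) - 1) * ρ) ≠ 0 := by rw [hcast]; exact h2
  have h1' : (1 : ℝ) - ρ ≠ 0 := sub_ne_zero.mpr (Ne.symm h1)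
  set c : ℝ := 1 + ((m : ℝ) - 1) * ρ with hc
  set M := ρ • J m m + (1 - ρ) • (1 : Matrix (Fin m) (Fin m) ℝ) with hM
  set B := (-(ρ / (c * (1 - ρ)))) • J m m + (1 - ρ)⁻¹ • (1 : Matrix (Fin m) (Fin m) ℝ)
    with hB
  have hcoefJ : ρ * (-(ρ / (c * (1 - ρ)))) * (m : ℝ) + ρ * (1 - ρ)⁻¹
      + (1 - ρ) * (-(ρ / (c * (1 - ρ)))) = 0 := by
    have hc0' : 1 - ρ + ρ * (m:ℝ) ≠ 0 := by intro h; apply hc0; rw [hc]; linarith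
    rw [hc]; field_simp
    have hX : (1 - ρ + ρ * (m:ℝ)) * (1 - ρ + ρ * (m:ℝ))⁻¹ = 1 := mul_inv_cancel₀ hc0'
    linear_combination (-ρ) * hX
  have hcoef1 : (1 - ρ) * (1 - ρ)⁻¹ = 1 := mul_inv_cancel₀ h1'
  have hMB : M * B = 1 := by
    rw [hM, hB, mulJI, hcoefJ, hcoef1, zero_smul, one_smul, zero_add]
  have hunit : IsUnit M :=
    (Matrix.isUnit_iff_isUnit_det M).mpr (Matrix.isUnit_det_of_right_inverse hMB)
  have hMinv : M⁻¹ = B := Matrix.inv_eq_right_inv hMB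
  refine ⟨hunit, ?_⟩
  rw [hMinv]
  have hJB : _root_.J n m * B = c⁻¹ • _root_.J n m := by
    rw [hB, Matrix.mul_add, Matrix.mul_smul, Matrix.mul_smul, Jmul, Matrix.mul_one,
      smul_smul, ← add_smul]
    congr 1
    have hc0' : 1 - ρ + ρ * (m:ℝ) ≠ 0 := by intro h; apply hc0; rw [hc]; linarith
    rw [hc]; field_simp
    have hX : (1 - ρ + ρ * (m:ℝ)) * (1 - ρ + ρ * (m:ℝ))⁻¹ = 1 := mul_inv_cancel₀ hc0'
    linear_combination (-1 : ℝ) * hX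
  have hP : (ρ • J n m) * B * (ρ • J m n) = (ρ ^ 2 * m / c) • J n n := by
    rw [Matrix.smul_mul, hJB, smul_smul, Matrix.smul_mul, Matrix.mul_smul, Jmul,
      smul_smul, smul_smul]
    congr 1
    rw [hc]; field_simp
  rw [hP]
  have hsum : ∑ i : Fin n, ∑ j : Fin n,
      ((ρ • J n n + (1 - ρ) • (1 : Matrix (Fin n) (Fin n) ℝ))
        - (ρ ^ 2 * m / c) • J n n) i j
      = (n : ℝ) * ((n : ℝ) * ρ + (1 - ρ) - (n : ℝ) * (ρ ^ 2 * m / c)) := by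
    simp [Matrix.sub_apply, Matrix.add_apply, Matrix.smul_apply, Matrix.one_apply,
      _root_.J, Finset.sum_sub_distrib, Finset.sum_add_distrib, Finset.sum_ite_eq,
      mul_ite, Finset.sum_const, Finset.card_univ]
    ring
  rw [hsum, psi, ← hcast, hc]
  field_simp
  ring
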